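/- Let σ be a k-permutation of degree n, let L ⊆ {1,…,n} be nonempty, and let γ be an integer with min(L) ≤ γ ≤ max(L) − 1. If γ is a k-rooted cut of σ, then the integer γ^{|L} := |{1,…,γ} ∩ L| is a k-rooted cut of the restriction σ^{|L}. -/

import Mathlib

/-- `σ` is a `k`-permutation of degree `n`: a word over the alphabet `{1, …, n}`
in which every value `i ∈ {1, …, n}` occurs exactly `k` times (and no other
letter occurs). -/
def IsMultiPerm (k n : ℕ) (σ : List ℕ) : Prop :=
  ∀ i : ℕ, σ.count i = if 1 ≤ i ∧ i ≤ n then k else 0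

/-- The restriction `σ^{|L}` of a multipermutation `σ` to a set `L` of values:
delete all letters whose value is not in `L`, and replace, for each `x`, the
`x`-th smallest element of `L` by `x`. -/
def restrict (σ : List ℕ) (L : Finset ℕ) : List ℕ :=
  (σ.filter fun x => decide (x ∈ L)).map fun x => (L.filter fun y => y ≤ x).card

/-- `γ` is a `k`-rooted cut of the `k`-permutation `σ` of degree `n`:
`1 ≤ γ ≤ n - 1` and `σ = μ·ν·ω` where `μ` consists of the first `k` letters of
`σ` and `ν`, `ω` are words such that every letter of `ν` is at most `γ` and
every letter of `ω` is greater than `γ`. -/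
def IsKRootedCut (k n : ℕ) (σ : List ℕ) (γ : ℕ) : Prop :=
  1 ≤ γ ∧ γ ≤ n - 1 ∧
    ∃ μ ν ω : List ℕ,
      σ = μ ++ ν ++ ω ∧ μ.length = k ∧ (∀ x ∈ ν, x ≤ γ) ∧ (∀ x ∈ ω, γ < x)

/-- A `k`-permutation of degree `n` is `k`-rooted cuttable if it has a
`k`-rooted cut. -/
def KRootedCuttable (k n : ℕ) (σ : List ℕ) : Prop :=
  ∃ γ, IsKRootedCut k n σ γ

/-- A `k`-permutation of degree `n` is fully `k`-rooted cuttable if its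
restriction to every interval `{a, …, b} ⊆ {1, …, n}` with `a < b` is
`k`-rooted cuttable. -/
def FullyKRootedCuttable (k n : ℕ) (σ : List ℕ) : Prop :=
  ∀ a b : ℕ, 1 ≤ a → a < b → b ≤ n →
    KRootedCuttable k (Finset.Icc a b).card (restrict σ (Finset.Icc a b))

/-- If `γ` is a `k`-rooted cut of a `k`-permutation `σ` of degree `n`, and
`L ⊆ {1, …, n}` is nonempty with `min L ≤ γ ≤ max L - 1`, then
`γ^{|L} = |{1, …, γ} ∩ L|` is a `k`-rooted cut of the restriction `σ^{|L}`. -/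
theorem isKRootedCut_restrict (k n : ℕ) (hk : 1 ≤ k) (hn : 1 ≤ n)
    (σ : List ℕ) (hσ : IsMultiPerm k n σ) (L : Finset ℕ) (hL : L.Nonempty)
    (hLsub : L ⊆ Finset.Icc 1 n) (γ : ℕ)
    (hγ₁ : L.min' hL ≤ γ) (hγ₂ : γ ≤ L.max' hL - 1)
    (hγ : IsKRootedCut k n σ γ) :
    IsKRootedCut k L.card (restrict σ L) ((Finset.Icc 1 γ ∩ L).card) := by
  obtain ⟨hg1, hg2, μ, ν, ω, hσeq, hμlen, hν, hω⟩ := hγ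
  set γ' := (Finset.Icc 1 γ ∩ L).card with hγ'def
  set f : ℕ → ℕ := fun x => (L.filter fun y => y ≤ x).card with hf
  set F : ℕ → Bool := fun x => decide (x ∈ L) with hF
  -- basic facts about min'/max'
  have hmin := L.min'_mem hL
  have hmax := L.max'_mem hL
  have hmin1 : 1 ≤ L.min' hL := (Finset.mem_Icc.1 (hLsub hmin)).1
  have hmax1 : 1 ≤ L.max' hL := (Finset.mem_Icc.1 (hLsub hmax)).1
  have hγmax : γ < L.max' hL := lt_of_le_of_lt hγ₂ (Nat.sub_lt hmax1 one_pos)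
  -- 1 ≤ γ'
  have hγ'1 : 1 ≤ γ' := by
    have : L.min' hL ∈ Finset.Icc 1 γ ∩ L :=
      Finset.mem_inter.2 ⟨Finset.mem_Icc.2 ⟨hmin1, hγ₁⟩, hmin⟩
    exact Finset.card_pos.2 ⟨_, this⟩
  -- γ' ≤ L.card - 1
  have hγ'2 : γ' ≤ L.card - 1 := by
    apply Nat.le_sub_one_of_lt
    apply Finset.card_lt_card
    refine ⟨Finset.inter_subset_right, fun hsub => ?_⟩
    have := Finset.mem_inter.1 (hsub hmax)
    exact absurd (Finset.mem_Icc.1 this.1).2 (not_le.2 hγmax)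
  -- value bounds under f
  have hle : ∀ x ∈ L, x ≤ γ → f x ≤ γ' := by
    intro x hxL hxγ
    apply Finset.card_le_card
    intro y hy
    obtain ⟨hyL, hyx⟩ := Finset.mem_filter.1 hy
    exact Finset.mem_inter.2
      ⟨Finset.mem_Icc.2 ⟨(Finset.mem_Icc.1 (hLsub hyL)).1, le_trans hyx hxγ⟩, hyL⟩
  have hgt : ∀ x ∈ L, γ < x → γ' < f x := by
    intro x hxL hxγ
    apply Finset.card_lt_card
    constructor
    · intro y hy
      obtain ⟨hy1, hyL⟩ := Finset.mem_inter.1 hy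
      exact Finset.mem_filter.2 ⟨hyL, le_trans (Finset.mem_Icc.1 hy1).2 (le_of_lt hxγ)⟩
    · intro hsub
      have hx : x ∈ L.filter fun y => y ≤ x := Finset.mem_filter.2 ⟨hxL, le_refl x⟩
      have := Finset.mem_inter.1 (hsub hx)
      exact absurd (Finset.mem_Icc.1 this.1).2 (not_le.2 hxγ)
  -- the restricted word and its decomposition
  set A : List ℕ := (μ.filter F).map f with hA
  set B : List ℕ := (ν.filter F).map f with hB
  set C : List ℕ := (ω.filter F).map f with hC
  have hr : restrict σ L = A ++ B ++ C := by
    simp [restrict, hσeq, List.filter_append, List.map_append, hA, hB, hC, hF, hf]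
  have hAlen : A.length ≤ k := by
    rw [hA, List.length_map]
    exact le_trans (List.length_filter_le _ _) (le_of_eq hμlen)
  -- length of the restriction is at least k
  have hrlen : k ≤ (restrict σ L).length := by
    have ha : L.min' hL ∈ L := hmin
    have hcount : σ.count (L.min' hL) = k := by
      have := hσ (L.min' hL)
      rwa [if_pos ⟨hmin1, (Finset.mem_Icc.1 (hLsub hmin)).2⟩] at this
    have h1 : σ.count (L.min' hL) = (σ.filter F).count (L.min' hL) := by
      rw [List.count_filter]
      simp [hF, ha]
    calc k = (σ.filter F).count (L.min' hL) := by rw [← h1, hcount]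
      _ ≤ (σ.filter F).length := List.count_le_length
      _ = (restrict σ L).length := (List.length_map _).symm
  -- membership facts
  have hBmem : ∀ x ∈ B, x ≤ γ' := by
    intro x hx
    obtain ⟨y, hy, rfl⟩ := List.mem_map.1 hx
    have hyν := List.mem_of_mem_filter hy
    have hyL : y ∈ L := by
      have := List.of_mem_filter hy
      simpa [hF] using this
    exact hle y hyL (hν y hyν)
  have hCmem : ∀ x ∈ C, γ' < x := by
    intro x hx
    obtain ⟨y, hy, rfl⟩ := List.mem_map.1 hx
    have hyω := List.mem_of_mem_filter hy
    have hyL : y ∈ L := by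
      have := List.of_mem_filter hy
      simpa [hF] using this
    exact hgt y hyL (hω y hyω)
  refine ⟨hγ'1, hγ'2, (restrict σ L).take k, ?_⟩
  have htake : ((restrict σ L).take k).length = k := by
    rw [List.length_take]
    exact min_eq_left hrlen
  have hdrop : (restrict σ L).drop k = (B ++ C).drop (k - A.length) := by
    have h : k = A.length + (k - A.length) := (Nat.add_sub_cancel' hAlen).symm
    rw [hr, List.append_assoc]
    conv_lhs => rw [h]
    rw [List.drop_length_add_append]
  by_cases hm : k - A.length ≤ B.length
  · refine ⟨B.drop (k - A.length), C, ?_, htake, ?_, ?_⟩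
    · rw [List.append_assoc, ← List.drop_append_of_le_length hm, ← hdrop,
        List.take_append_drop]
    · intro x hx
      exact hBmem x (List.mem_of_mem_drop hx)
    · exact hCmem
  · refine ⟨[], (restrict σ L).drop k, ?_, htake, ?_, ?_⟩
    · simp [List.take_append_drop]
    · intro x hx; simp at hx
    · intro x hx
      rw [hdrop] at hx
      have hx' : x ∈ C.drop (k - A.length - B.length) := by
        have : k - A.length = B.length + (k - A.length - B.length) :=
          (Nat.add_sub_cancel' (le_of_not_ge hm)).symm
        rwa [this, List.drop_length_add_append] at hx
      exact hCmem x (List.mem_of_mem_drop hx')
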